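/- Let C be an (n, k, d = n−1)(α, β) exact-repair linear regenerating code over F_q with file size B = dim C. Then B ≤ Σ_{j=0}^{k−1} min(α, (n−1−j)β). -/

import Mathlib

open scoped BigOperators

/-- An `(n, k, d = n-1), (α, β)` exact-repair linear regenerating code over `F`. -/
def IsERRC (F : Type*) [Field F] (n k a b : ℕ)
    (C : Submodule F ((Fin n × Fin a) → F)) : Prop :=
  (∀ S : Finset (Fin n), S.card = k →
      ∀ c ∈ C, (∀ p : Fin n × Fin a, p.1 ∈ S → c p = 0) → c = 0) ∧
  (∀ f : Fin n, ∃ (r : Fin n → ((Fin a → F) →ₗ[F] (Fin b → F)))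
      (ψ : (({j : Fin n // j ≠ f} → (Fin b → F)) →ₗ[F] (Fin a → F))),
      ∀ c ∈ C, (fun i => c (f, i)) = ψ (fun j => r j.val (fun i => c (j.val, i))))

/-- The submodule of vectors vanishing on all nodes of index `< m`. -/
def Ksub (F : Type*) [Field F] (n a m : ℕ) : Submodule F ((Fin n × Fin a) → F) where
  carrier := {c | ∀ p : Fin n × Fin a, p.1.val < m → c p = 0}
  add_mem' := by intro x y hx hy p hp; simp [hx p hp, hy p hp]
  zero_mem' := by intro p hp; rfl
  smul_mem' := by intro s x hx p hp; simp [hx p hp]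

lemma mem_Ksub {F : Type*} [Field F] {n a m : ℕ} {c : (Fin n × Fin a) → F} :
    c ∈ Ksub F n a m ↔ ∀ p : Fin n × Fin a, p.1.val < m → c p = 0 := Iff.rfl

/-- Projection to node `f`. -/
def Qm (F : Type*) [Field F] (n a : ℕ) (f : Fin n) :
    ((Fin n × Fin a) → F) →ₗ[F] (Fin a → F) :=
  LinearMap.pi fun i => LinearMap.proj (f, i)

lemma Qm_apply {F : Type*} [Field F] {n a : ℕ} (f : Fin n) (c : (Fin n × Fin a) → F) :
    Qm F n a f c = fun i => c (f, i) := rfl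

lemma Ksub_succ {F : Type*} [Field F] {n a m : ℕ} (hmn : m < n) :
    Ksub F n a (m + 1) = Ksub F n a m ⊓ LinearMap.ker (Qm F n a ⟨m, hmn⟩) := by
  ext c
  simp only [Submodule.mem_inf, mem_Ksub, LinearMap.mem_ker, Qm_apply]
  constructor
  · intro h
    refine ⟨fun p hp => h p (by omega), ?_⟩
    funext i
    exact h (⟨m, hmn⟩, i) (by simp)
  · rintro ⟨h1, h2⟩ p hp
    rcases Nat.lt_or_ge p.1.val m with h | h
    · exact h1 p h
    · have hpm : p.1 = ⟨m, hmn⟩ := Fin.ext (by simp only [Fin.val_mk]; omega)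
      have : c (⟨m, hmn⟩, p.2) = 0 := congrFun h2 p.2
      rwa [← hpm] at this
  
/-- cut-set bound for exact-repair linear codes, `d = n-1`:
`B ≤ ∑_{j=0}^{k-1} min(α, (n-1-j)β)`. -/
theorem stmt3 (F : Type*) [Field F] [Fintype F] (n k a b : ℕ)
    (hn : 2 ≤ n) (hk1 : 1 ≤ k) (hk2 : k ≤ n - 1) (hb : 1 ≤ b) (hba : b ≤ a)
    (C : Submodule F ((Fin n × Fin a) → F))
    (hC : IsERRC F n k a b C) :
    Module.finrank F C ≤ ∑ j ∈ Finset.range k, min a ((n - 1 - j) * b) := by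
  classical
  obtain ⟨hDC, hRep⟩ := hC
  have hkn : k < n := by omega
  set W : ℕ → Submodule F ((Fin n × Fin a) → F) := fun m => C ⊓ Ksub F n a m with hWdef
  -- W 0 = C
  have hK0 : Ksub F n a 0 = ⊤ := by
    ext c; simp [mem_Ksub]
  have hW0 : W 0 = C := by
    rw [hWdef]; simp [hK0]
  -- W k = ⊥
  have hWk : W k = ⊥ := by
    rw [eq_bot_iff]
    rintro c ⟨hcC, hcK⟩
    have hScard : (Finset.Iio (⟨k, hkn⟩ : Fin n)).card = k := by
      simpa using Fin.card_Iio (⟨k, hkn⟩ : Fin n)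
    have := hDC (Finset.Iio (⟨k, hkn⟩ : Fin n)) hScard c hcC ?_
    · simpa using this
    · intro p hp
      exact hcK p (by simpa [Finset.mem_Iio, Fin.lt_def] using hp)
  -- key inequality
  have key : ∀ m, m < k →
      Module.finrank F (W m) ≤ Module.finrank F (W (m + 1)) + min a ((n - 1 - m) * b) := by
    intro m hmk
    have hmn : m < n := by omega
    set fm : Fin n := ⟨m, hmn⟩ with hfm
    set Q : ((Fin n × Fin a) → F) →ₗ[F] (Fin a → F) := Qm F n a fm with hQ
    have hW1 : W (m + 1) = W m ⊓ LinearMap.ker Q := by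
      rw [hWdef]; simp only []
      rw [Ksub_succ hmn, ← inf_assoc]
    set g : ↥(W m) →ₗ[F] (Fin a → F) := Q.domRestrict (W m) with hg
    have h1 : Module.finrank F (LinearMap.range g) + Module.finrank F (LinearMap.ker g)
        = Module.finrank F (W m) := LinearMap.finrank_range_add_finrank_ker g
    -- kernel part
    have hkerg : LinearMap.ker g = (W (m + 1)).comap (W m).subtype := by
      ext x
      simp only [LinearMap.mem_ker, hg, LinearMap.domRestrict_apply, Submodule.mem_comap,
        Submodule.coe_subtype, hW1, Submodule.mem_inf, LinearMap.mem_ker]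
      exact ⟨fun h => ⟨x.2, h⟩, fun h => h.2⟩
    have hker2 : Module.finrank F (LinearMap.ker g) = Module.finrank F (W (m + 1)) := by
      rw [hkerg]
      exact (Submodule.comapSubtypeEquivOfLe (by rw [hW1]; exact inf_le_left)).finrank_eq
    -- range part, bound 1 : ≤ a
    have hr1 : Module.finrank F (LinearMap.range g) ≤ a := by
      have := Submodule.finrank_le (LinearMap.range g)
      simpa [Module.finrank_pi] using this
    -- range part, bound 2 : ≤ (n-1-m) * b, via repair
    obtain ⟨r, ψ, hψ⟩ := hRep fm
    set J := {j : {j : Fin n // j ≠ fm} // m < (j : Fin n).val} with hJ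
    set E : (J → (Fin b → F)) →ₗ[F] ({j : Fin n // j ≠ fm} → (Fin b → F)) :=
      LinearMap.pi fun j =>
        if h : m < (j : Fin n).val then LinearMap.proj (⟨j, h⟩ : J) else 0 with hE
    have hle : LinearMap.range g ≤ LinearMap.range (ψ ∘ₗ E) := by
      rintro x ⟨⟨c, hcW⟩, rfl⟩
      obtain ⟨hcC, hcK⟩ := hcW
      refine ⟨fun (j : J) => r (j.1 : Fin n) (fun i => c ((j.1 : Fin n), i)), ?_⟩
      have hEv : E (fun (j : J) => r (j.1 : Fin n) (fun i => c ((j.1 : Fin n), i)))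
          = fun j : {j : Fin n // j ≠ fm} => r j.val (fun i => c (j.val, i)) := by
        funext j
        rw [hE]
        simp only [LinearMap.pi_apply]
        by_cases h : m < (j : Fin n).val
        · simp [h]
        · simp only [h, dif_neg, not_false_iff, LinearMap.zero_apply]
          have hne : (j : Fin n).val ≠ m := fun hh => j.2 (Fin.ext hh)
          have hlt : (j : Fin n).val < m := by omega
          have : (fun i => c ((j : Fin n), i)) = (0 : Fin a → F) := by
            funext i; exact hcK ((j : Fin n), i) hlt
          rw [this, map_zero]
      rw [LinearMap.comp_apply, hEv]
      exact (hψ c hcC).symm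
    have hcardJ : Fintype.card J = n - 1 - m := by
      have e1 : J ≃ {j : Fin n // j ≠ fm ∧ m < j.val} :=
        Equiv.subtypeSubtypeEquivSubtypeInter (· ≠ fm) (fun j => m < j.val)
      have e2 : {j : Fin n // j ≠ fm ∧ m < j.val} ≃ {j : Fin n // fm < j} :=
        Equiv.subtypeEquivRight (by
          intro j
          rw [Fin.lt_def]
          constructor
          · exact fun h => h.2
          · intro h
            exact ⟨fun hh => by simp [hh, hfm] at h, h⟩)
      rw [Fintype.card_congr (e1.trans e2)]
      have e3 : {j : Fin n // fm < j} ≃ Set.Ioi fm :=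
        Equiv.subtypeEquivRight (by intro j; simp [Set.mem_Ioi])
      rw [Fintype.card_congr e3, ← Set.toFinset_card, Set.toFinset_Ioi, Fin.card_Ioi]
    have hr2 : Module.finrank F (LinearMap.range g) ≤ (n - 1 - m) * b := by
      calc Module.finrank F (LinearMap.range g)
          ≤ Module.finrank F (LinearMap.range (ψ ∘ₗ E)) := Submodule.finrank_mono hle
        _ ≤ Module.finrank F (J → (Fin b → F)) := LinearMap.finrank_range_le _
        _ = (n - 1 - m) * b := by
            rw [Module.finrank_pi_fintype]
            simp [Module.finrank_pi, hcardJ]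
    omega
  -- telescoping
  have tel : ∀ i m, m + i = k →
      Module.finrank F (W m) ≤ ∑ j ∈ Finset.Ico m k, min a ((n - 1 - j) * b) := by
    intro i
    induction i with
    | zero =>
      intro m hm
      have : m = k := by omega
      subst this
      rw [hWk]
      simp
    | succ i ih =>
      intro m hm
      have hmk : m < k := by omega
      calc Module.finrank F (W m)
          ≤ Module.finrank F (W (m + 1)) + min a ((n - 1 - m) * b) := key m hmk
        _ ≤ (∑ j ∈ Finset.Ico (m + 1) k, min a ((n - 1 - j) * b))
              + min a ((n - 1 - m) * b) := by
            have := ih (m + 1) (by omega)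
            omega
        _ = ∑ j ∈ Finset.Ico m k, min a ((n - 1 - j) * b) := by
            rw [Finset.sum_eq_sum_Ico_succ_bot hmk]
            ring
  have := tel k 0 (by omega)
  rw [hW0] at this
  rw [Finset.range_eq_Ico]
  exact this
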